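/- Let V and W be finite dimensional G-graded vector spaces over a field k. If the G-graded algebras END(V) and END(W) are isomorphic, then there exists σ ∈ G such that W ≅ V(σ) as graded vector spaces. -/

import Mathlib

/-- The `σ`-component of the graded endomorphism algebra `END(V)` of a
`G`-graded vector space `V = ⊕ 𝒱 g`:
`END(V)_σ = {f ∈ End(V) | f(V_g) ⊆ V_{σg} for all g}`. -/
def ENDdeg {k : Type*} [Field k] {G : Type*} [Group G]
    {V : Type*} [AddCommGroup V] [Module k V]
    (𝒱 : G → Submodule k V) (σ : G) : Submodule k (Module.End k V) where
  carrier := {f | ∀ g : G, ∀ v ∈ 𝒱 g, f v ∈ 𝒱 (σ * g)}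
  add_mem' := by
    intro a b ha hb g v hv
    simpa using (𝒱 (σ * g)).add_mem (ha g v hv) (hb g v hv)
  zero_mem' := by intro g v hv; simp
  smul_mem' := by
    intro c f hf g v hv
    simpa using (𝒱 (σ * g)).smul_mem c (hf g v hv)



private lemma exists_dual_one' {k V : Type*} [Field k] [AddCommGroup V] [Module k V]
    {v0 : V} (h : v0 ≠ 0) : ∃ l : V →ₗ[k] k, l v0 = 1 := by
  obtain ⟨g, hg⟩ := (LinearMap.toSpanSingleton k V v0).exists_leftInverse_of_injective
    (LinearMap.ker_toSpanSingleton (R := k) h)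
  exact ⟨g, by simpa using congrArg (fun m : k →ₗ[k] k ↦ m 1) hg⟩

private lemma end_conj' {k V W : Type*} [Field k] [AddCommGroup V] [Module k V]
    [AddCommGroup W] [Module k W]
    {v0 : V} (hv0 : v0 ≠ 0)
    (e : Module.End k V ≃ₐ[k] Module.End k W) :
    ∃ u : V ≃ₗ[k] W, ∀ (f : Module.End k V) (v : V), e f (u v) = u (f v) := by
  obtain ⟨l, hl⟩ := exists_dual_one' (k := k) hv0
  set T : V → Module.End k V := fun v => (LinearMap.smulRight l v : V →ₗ[k] V) with hT
  have hTapp : ∀ v x, T v x = l x • v := fun _ _ => rfl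
  have hmul : ∀ (f : Module.End k V) v, f * T v = T (f v) := by
    intro f v; ext x; simp [hTapp, Module.End.mul_apply]
  have hp : T v0 v0 = v0 := by simp [hTapp, hl]
  have hpne : e (T v0) ≠ 0 := by
    intro hz
    have : T v0 = 0 := e.injective (by simpa using hz)
    rw [this] at hp; simp at hp; exact hv0 hp.symm
  obtain ⟨w', hw'⟩ : ∃ w', e (T v0) w' ≠ 0 := by
    by_contra hc; push_neg at hc
    exact hpne (LinearMap.ext fun x => hc x)
  set w0 : W := e (T v0) w' with hw0def
  have hw0 : w0 ≠ 0 := hw'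
  have hTvv : T v0 * T v0 = T v0 := by rw [hmul, hp]
  have hfix : e (T v0) w0 = w0 := by
    have := congrArg (fun F : Module.End k W => F w') (congrArg e hTvv)
    simpa [map_mul, Module.End.mul_apply] using this
  obtain ⟨lW, hlW⟩ := exists_dual_one' (k := k) hw0
  have key : ∀ x : W, ∃ c : k, e (T v0) x = c • w0 := by
    intro x
    set f : Module.End k W := lW.smulRight x with hf
    have hfw0 : f w0 = x := by simp [hf, hlW]
    have h1 : T v0 * e.symm f * T v0 = l (e.symm f v0) • T v0 := by
      ext v
      simp only [Module.End.mul_apply, LinearMap.smul_apply, hTapp, map_smul, smul_smul]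
      rw [mul_comm]
    have h2 : e (T v0) * f * e (T v0) = l (e.symm f v0) • e (T v0) := by
      have := congrArg e h1
      simpa [map_mul, map_smul, e.apply_symm_apply] using this
    refine ⟨l (e.symm f v0), ?_⟩
    have := congrArg (fun F : Module.End k W => F w0) h2
    simpa [Module.End.mul_apply, hfix, hfw0] using this
  have hadd : ∀ v v' : V, T (v + v') = T v + T v' := by
    intro v v'; ext x; simp [hTapp, smul_add]
  have hsmul : ∀ (c : k) (v : V), T (c • v) = c • T v := by
    intro c v; ext x
    show l x • (c • v) = c • (l x • v)
    rw [smul_comm]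
  set u0 : V →ₗ[k] W :=
    { toFun := fun v => e (T v) w0
      map_add' := fun v v' => by
        show e (T (v + v')) w0 = e (T v) w0 + e (T v') w0
        rw [hadd, map_add, LinearMap.add_apply]
      map_smul' := fun c v => by
        show e (T (c • v)) w0 = c • e (T v) w0
        rw [hsmul, map_smul, LinearMap.smul_apply] }
    with hu0
  have hu0app : ∀ v, u0 v = e (T v) w0 := fun _ => rfl
  have hequi : ∀ (f : Module.End k V) (v : V), e f (u0 v) = u0 (f v) := by
    intro f v
    rw [hu0app, hu0app, ← hmul, map_mul, Module.End.mul_apply]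
  have hu0v0 : u0 v0 = w0 := by rw [hu0app, hfix]
  have hinj : Function.Injective u0 := by
    rw [← LinearMap.ker_eq_bot]
    apply LinearMap.ker_eq_bot'.mpr
    intro v hv
    have hz : ∀ x, (e (T v) * e (T v0)) x = 0 := by
      intro x
      obtain ⟨c, hc⟩ := key x
      rw [Module.End.mul_apply, hc, map_smul, ← hu0app, hv, smul_zero]
    have : T v * T v0 = 0 := by
      apply e.injective
      rw [map_mul, map_zero]
      exact LinearMap.ext hz
    have := congrArg (fun F : Module.End k V => F v0) this
    simpa [Module.End.mul_apply, hp, hTapp, hl] using this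
  have hsurj : Function.Surjective u0 := by
    intro w
    refine ⟨e.symm (lW.smulRight w) v0, ?_⟩
    rw [← hequi, hu0v0, e.apply_symm_apply]
    simp [hlW]
  exact ⟨LinearEquiv.ofBijective u0 ⟨hinj, hsurj⟩, fun f v => hequi f v⟩

private lemma mem_ENDdeg' {k : Type*} [Field k] {G : Type*} [Group G]
    {V : Type*} [AddCommGroup V] [Module k V]
    {𝒱 : G → Submodule k V} {σ : G} {f : Module.End k V} :
    f ∈ ENDdeg 𝒱 σ ↔ ∀ g : G, ∀ v ∈ 𝒱 g, f v ∈ 𝒱 (σ * g) := Iff.rfl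

private lemma exists_dual_one'' {k V : Type*} [Field k] [AddCommGroup V] [Module k V]
    {v0 : V} (h : v0 ≠ 0) : ∃ l : V →ₗ[k] k, l v0 = 1 := by
  obtain ⟨g, hg⟩ := (LinearMap.toSpanSingleton k V v0).exists_leftInverse_of_injective
    (LinearMap.ker_toSpanSingleton (R := k) h)
  exact ⟨g, by simpa using congrArg (fun m : k →ₗ[k] k ↦ m 1) hg⟩

private lemma rigidity' {k : Type*} [Field k] {G : Type*} [Group G] [DecidableEq G]
    {V : Type*} [AddCommGroup V] [Module k V]
    (𝒱 𝒱' : G → Submodule k V) (hV : DirectSum.IsInternal 𝒱) (hV' : DirectSum.IsInternal 𝒱')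
    (h : ∀ g, ENDdeg 𝒱 g = ENDdeg 𝒱' g) :
    ∃ σ : G, ∀ g, 𝒱' g = 𝒱 (g * σ) := by
  classical
  by_cases hsub : Subsingleton V
  · refine ⟨1, fun g => ?_⟩
    ext x
    have hx : x = 0 := Subsingleton.elim _ _
    simp [hx]
  haveI : Nontrivial V := not_subsingleton_iff_nontrivial.mp hsub
  set ε : (DirectSum G fun g => 𝒱 g) ≃ₗ[k] V := LinearEquiv.ofBijective (DirectSum.coeLinearMap 𝒱) hV with hε
  set ε' : (DirectSum G fun g => 𝒱' g) ≃ₗ[k] V :=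
    LinearEquiv.ofBijective (DirectSum.coeLinearMap 𝒱') hV' with hε'
  set π : G → Module.End k V :=
    fun g => (𝒱 g).subtype ∘ₗ ((DFinsupp.lapply g) ∘ₗ ε.symm.toLinearMap) with hπ
  set π' : G → Module.End k V :=
    fun g => (𝒱' g).subtype ∘ₗ ((DFinsupp.lapply g) ∘ₗ ε'.symm.toLinearMap) with hπ'
  have hπapp : ∀ g v, π g v = ((ε.symm v) g : V) := fun _ _ => rfl
  have hπ'app : ∀ g v, π' g v = ((ε'.symm v) g : V) := fun _ _ => rfl
  have hπmem : ∀ g v, π g v ∈ 𝒱 g := fun g v => SetLike.coe_mem _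
  have hπ'mem : ∀ g v, π' g v ∈ 𝒱' g := fun g v => SetLike.coe_mem _
  have hπsame : ∀ g v, v ∈ 𝒱 g → π g v = v := by
    intro g v hv
    rw [hπapp, hV.ofBijective_coeLinearMap_of_mem hv]
  have hπ'same : ∀ g v, v ∈ 𝒱' g → π' g v = v := by
    intro g v hv
    rw [hπ'app, hV'.ofBijective_coeLinearMap_of_mem hv]
  have hπne : ∀ g g' v, v ∈ 𝒱 g → g ≠ g' → π g' v = 0 := by
    intro g g' v hv hne
    rw [hπapp, hV.ofBijective_coeLinearMap_of_mem_ne hne hv]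
    rfl
  have hπ'ne : ∀ g g' v, v ∈ 𝒱' g → g ≠ g' → π' g' v = 0 := by
    intro g g' v hv hne
    rw [hπ'app, hV'.ofBijective_coeLinearMap_of_mem_ne hne hv]
    rfl
  -- π g ∈ ENDdeg 𝒱 1
  have hπdeg : ∀ g, π g ∈ ENDdeg 𝒱 1 := by
    intro g g' v hv
    rw [one_mul]
    by_cases hgg : g' = g
    · subst hgg; rw [hπsame g' v hv]; exact hv
    · rw [hπne g' g v hv hgg]; exact Submodule.zero_mem _
  have hπ'deg : ∀ g, π' g ∈ ENDdeg 𝒱' 1 := by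
    intro g g' v hv
    rw [one_mul]
    by_cases hgg : g' = g
    · subst hgg; rw [hπ'same g' v hv]; exact hv
    · rw [hπ'ne g' g v hv hgg]; exact Submodule.zero_mem _
  -- cross preservation
  have hcross : ∀ g g' v, v ∈ 𝒱' g' → π g v ∈ 𝒱' g' := by
    intro g g' v hv
    have := ((h 1) ▸ hπdeg g) g' v hv
    rwa [one_mul] at this
  have hcross' : ∀ g g' v, v ∈ 𝒱 g' → π' g v ∈ 𝒱 g' := by
    intro g g' v hv
    have := ((h 1).symm ▸ hπ'deg g) g' v hv
    rwa [one_mul] at this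
  -- sum formula
  have hsum : ∀ v : V, v = ∑ g ∈ (ε.symm v).support, π g v := by
    intro v
    conv_lhs => rw [← ε.apply_symm_apply v]
    rw [hε]
    show DirectSum.coeLinearMap 𝒱 _ = _
    rw [DirectSum.coeLinearMap_eq_dfinsuppSum]
    rfl
  have hsum' : ∀ v : V, v = ∑ g ∈ (ε'.symm v).support, π' g v := by
    intro v
    conv_lhs => rw [← ε'.apply_symm_apply v]
    rw [hε']
    show DirectSum.coeLinearMap 𝒱' _ = _
    rw [DirectSum.coeLinearMap_eq_dfinsuppSum]
    rfl
  have hmemsum : ∀ (P : Submodule k V) (v : V), (∀ g, π g v ∈ P) → v ∈ P := by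
    intro P v hp
    rw [hsum v]; exact Submodule.sum_mem _ fun g _ => hp g
  have hmemsum' : ∀ (P : Submodule k V) (v : V), (∀ g, π' g v ∈ P) → v ∈ P := by
    intro P v hp
    rw [hsum' v]; exact Submodule.sum_mem _ fun g _ => hp g
  have hexc : ∀ v : V, v ≠ 0 → ∃ g, π g v ≠ 0 := by
    intro v hv
    by_contra hc; push_neg at hc
    exact hv (hmemsum ⊥ v (fun g => by rw [hc g]; exact Submodule.zero_mem _))
  have hexc' : ∀ v : V, v ≠ 0 → ∃ g, π' g v ≠ 0 := by
    intro v hv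
    by_contra hc; push_neg at hc
    exact hv (hmemsum' ⊥ v (fun g => by rw [hc g]; exact Submodule.zero_mem _))
  -- find a common nonzero bihomogeneous element
  obtain ⟨v, hvne⟩ := exists_ne (0 : V)
  obtain ⟨g₀, hg₀⟩ := hexc v hvne
  obtain ⟨h₀, hh₀⟩ := hexc' (π g₀ v) hg₀
  set x : V := π' h₀ (π g₀ v) with hxdef
  have hx0 : x ≠ 0 := hh₀
  have hxV' : x ∈ 𝒱' h₀ := hπ'mem h₀ _
  have hxV : x ∈ 𝒱 g₀ := hcross' h₀ g₀ _ (hπmem g₀ v)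
  -- the subspace S
  set S : Submodule k V :=
    (⨆ g, ⨆ _ : g ≠ g₀, 𝒱 g) ⊔ (⨆ g, ⨆ _ : g ≠ h₀, 𝒱' g) with hS
  have hxS : x ∉ S := by
    intro hmem
    obtain ⟨a, ha, b, hb, hab⟩ := Submodule.mem_sup.mp hmem
    have h1 : π g₀ a = 0 := by
      have hle : Submodule.map (π g₀) (⨆ g, ⨆ _ : g ≠ g₀, 𝒱 g) ≤ ⊥ := by
        rw [Submodule.map_iSup]
        refine iSup_le fun g => ?_
        rw [Submodule.map_iSup]
        refine iSup_le fun hg => ?_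
        rintro _ ⟨w, hw, rfl⟩
        rw [hπne g g₀ w hw hg]
        exact Submodule.zero_mem _
      simpa using hle ⟨a, ha, rfl⟩
    have h2 : π g₀ b ∈ (⨆ g, ⨆ _ : g ≠ h₀, 𝒱' g) := by
      have hle : Submodule.map (π g₀) (⨆ g, ⨆ _ : g ≠ h₀, 𝒱' g) ≤
          (⨆ g, ⨆ _ : g ≠ h₀, 𝒱' g) := by
        rw [Submodule.map_iSup]
        refine iSup_le fun g => ?_
        rw [Submodule.map_iSup]
        refine iSup_le fun hg => ?_
        refine le_trans ?_ (le_iSup₂ (f := fun (g : G) (_ : g ≠ h₀) => 𝒱' g) g hg)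
        rintro _ ⟨w, hw, rfl⟩
        exact hcross g₀ g w hw
      exact hle ⟨b, hb, rfl⟩
    have hxb : x ∈ (⨆ g, ⨆ _ : g ≠ h₀, 𝒱' g) := by
      have hx1 : x = π g₀ a + π g₀ b := by
        rw [← map_add, hab, hπsame g₀ x hxV]
      rw [hx1, h1, zero_add]; exact h2
    have hdisj := hV'.submodule_iSupIndep h₀
    exact hx0 ((Submodule.disjoint_def.mp hdisj) x hxV' hxb)
  -- a functional vanishing on S with value 1 at x
  have hxq : S.mkQ x ≠ 0 := by
    simpa [Submodule.Quotient.mk_eq_zero] using hxS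
  obtain ⟨l0, hl0⟩ := exists_dual_one'' (k := k) hxq
  set lam : V →ₗ[k] k := l0 ∘ₗ S.mkQ with hlam
  have hlamx : lam x = 1 := hl0
  have hlamS : ∀ v ∈ S, lam v = 0 := by
    intro v hv
    have hv0 : S.mkQ v = 0 := (Submodule.Quotient.mk_eq_zero S).mpr hv
    rw [hlam, LinearMap.comp_apply, hv0, map_zero]
  -- key claim
  have claim : ∀ (g₁ h₁ : G) (y : V), y ≠ 0 → y ∈ 𝒱 g₁ → y ∈ 𝒱' h₁ →
      h₁ = g₁ * g₀⁻¹ * h₀ := by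
    intro g₁ h₁ y hy hyV hyV'
    set f : Module.End k V := LinearMap.smulRight lam y with hf
    have hfapp : ∀ w, f w = lam w • y := fun _ => rfl
    have hfx : f x = y := by rw [hfapp, hlamx, one_smul]
    have hf1 : f ∈ ENDdeg 𝒱 (g₁ * g₀⁻¹) := by
      intro g w hw
      by_cases hg : g = g₀
      · have hgg : g₁ * g₀⁻¹ * g = g₁ := by rw [hg, inv_mul_cancel_right]
        rw [hgg, hfapp]
        exact Submodule.smul_mem _ _ hyV
      · have hwS : w ∈ S := Submodule.mem_sup_left
          (Submodule.mem_iSup_of_mem g (Submodule.mem_iSup_of_mem hg hw))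
        rw [hfapp, hlamS w hwS, zero_smul]
        exact Submodule.zero_mem _
    have hf3 : f ∈ ENDdeg 𝒱' (g₁ * g₀⁻¹) := (h (g₁ * g₀⁻¹)) ▸ hf1
    have hy2 : y ∈ 𝒱' (g₁ * g₀⁻¹ * h₀) := hfx ▸ hf3 h₀ x hxV'
    by_contra hne
    have hdisj := hV'.submodule_iSupIndep.pairwiseDisjoint hne
    exact hy (Submodule.disjoint_def.mp hdisj y hyV' hy2)
  refine ⟨h₀⁻¹ * g₀, fun g => le_antisymm ?_ ?_⟩
  · intro v hv
    refine hmemsum (𝒱 (g * (h₀⁻¹ * g₀))) v fun g₁ => ?_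
    by_cases hz : π g₁ v = 0
    · rw [hz]; exact Submodule.zero_mem _
    · have h1 := claim g₁ g (π g₁ v) hz (hπmem g₁ v) (hcross g₁ g v hv)
      have h2 : g₁ = g * (h₀⁻¹ * g₀) := by rw [h1]; group
      rw [← h2]; exact hπmem g₁ v
  · intro v hv
    refine hmemsum' (𝒱' g) v fun h₁ => ?_
    by_cases hz : π' h₁ v = 0
    · rw [hz]; exact Submodule.zero_mem _
    · have h1 := claim (g * (h₀⁻¹ * g₀)) h₁ (π' h₁ v) hz (hcross' h₁ _ v hv) (hπ'mem h₁ v)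
      have h2 : h₁ = g := by rw [h1]; group
      rw [← h2]; exact hπ'mem h₁ v

/-- If `END(V)` and `END(W)` are isomorphic as `G`-graded algebras
(for finite dimensional `G`-graded vector spaces `V`, `W`), then there exists
`σ ∈ G` with `W ≅ V(σ)` as graded vector spaces (where `V(σ)_g = V_{gσ}`). -/
theorem exists_suspension_of_END_iso {k : Type*} [Field k] {G : Type*} [Group G] [DecidableEq G]
    {V W : Type*} [AddCommGroup V] [Module k V] [FiniteDimensional k V]
    [AddCommGroup W] [Module k W] [FiniteDimensional k W]
    (𝒱 : G → Submodule k V) (hV : DirectSum.IsInternal 𝒱)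
    (𝒲 : G → Submodule k W) (hW : DirectSum.IsInternal 𝒲)
    (e : Module.End k V ≃ₐ[k] Module.End k W)
    (he : ∀ g : G, Submodule.map e.toLinearMap (ENDdeg 𝒱 g) = ENDdeg 𝒲 g) :
    ∃ (σ : G) (φ : W ≃ₗ[k] V),
      ∀ g : G, Submodule.map (φ : W →ₗ[k] V) (𝒲 g) = 𝒱 (g * σ) := by
  classical
  by_cases hsub : Subsingleton V
  · haveI := hsub
    haveI : Subsingleton (Module.End k W) :=
      (Equiv.subsingleton e.symm.toEquiv)
    haveI : Subsingleton W := by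
      constructor
      intro a b
      have h1 : (1 : Module.End k W) = 0 := Subsingleton.elim _ _
      have ha : a = (1 : Module.End k W) a := rfl
      have hb : b = (1 : Module.End k W) b := rfl
      rw [ha, hb, h1]
      simp
    refine ⟨1, LinearEquiv.ofSubsingleton W V, fun g => ?_⟩
    have hall : ∀ p q : Submodule k V, p = q := fun p q => by
      ext x
      have hx : x = 0 := Subsingleton.elim _ _
      simp [hx]
    exact hall _ _
  · haveI : Nontrivial V := not_subsingleton_iff_nontrivial.mp hsub
    obtain ⟨v0, hv0⟩ := exists_ne (0 : V)
    obtain ⟨u, hu⟩ := end_conj' hv0 e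
    set 𝒱' : G → Submodule k V := fun g => Submodule.map (u.symm : W →ₗ[k] V) (𝒲 g) with h𝒱'
    have hV' : DirectSum.IsInternal 𝒱' := by
      rw [DirectSum.isInternal_submodule_iff_iSupIndep_and_iSup_eq_top]
      obtain ⟨hWi, hWs⟩ :=
        (DirectSum.isInternal_submodule_iff_iSupIndep_and_iSup_eq_top 𝒲).mp hW
      constructor
      · have := (iSupIndep_map_orderIso_iff
          (Submodule.orderIsoMapComap (u.symm : W ≃ₗ[k] V)) (a := 𝒲)).mpr hWi
        exact this
      · rw [h𝒱']
        rw [← Submodule.map_iSup, hWs, Submodule.map_top, LinearMap.range_eq_top]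
        exact (u.symm : W ≃ₗ[k] V).surjective
    have hEq : ∀ g, ENDdeg 𝒱 g = ENDdeg 𝒱' g := by
      intro g
      have hiff : ∀ f : Module.End k V, f ∈ ENDdeg 𝒱 g ↔ e f ∈ ENDdeg 𝒲 g := by
        intro f
        constructor
        · intro hf; rw [← he g]; exact ⟨f, hf, rfl⟩
        · intro hf
          rw [← he g] at hf
          obtain ⟨f', hf', hff⟩ := hf
          have : f' = f := e.injective hff
          exact this ▸ hf'
      have hiff2 : ∀ f : Module.End k V, f ∈ ENDdeg 𝒱' g ↔ e f ∈ ENDdeg 𝒲 g := by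
        intro f
        constructor
        · intro hf h' w hw
          obtain ⟨w', hw', hww⟩ := hf h' (u.symm w) ⟨w, hw, rfl⟩
          have h1 : e f w = u (f (u.symm w)) := by
            conv_lhs => rw [← u.apply_symm_apply w]
            rw [hu]
          rw [h1, ← hww]
          simpa using hw'
        · intro hf h' v hv
          obtain ⟨w, hw, hwv⟩ := hv
          refine ⟨u (f v), ?_, by simp⟩
          have h1 : u (f v) = e f w := by
            rw [← hu, ← hwv]
            simp
          rw [h1]
          exact hf h' w hw
      ext f
      rw [hiff f, ← hiff2 f]
    obtain ⟨σ, hσ⟩ := rigidity' 𝒱 𝒱' hV hV' hEq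
    exact ⟨σ, u.symm, fun g => hσ g ▸ rfl⟩
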